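/- Let D be an intervention family on V and let X, Y, Z be pairwise disjoint finite subsets of V with X, Y nonempty. If X ⊨ Y|do(Z) holds and is Clus₁, then for all disjoint subsets s¹, s² ⊊ X with s¹ nonempty and s¹ ∪ s² ≠ X, one has s¹ ⊭ Y|do(s² ∪ Z). -/
import Mathlib


/-- An intervention family on a finite type `V` of observed variables with value
types `α i`: to every finite subset `I ⊆ V` and every assignment of values on `I`
it assigns a probability mass function on full assignments. -/
abbrev InterventionFamily (V : Type) [DecidableEq V] (α : V → Type) : Type :=
  ∀ I : Finset V, (∀ i : I, α i) → PMF (∀ i, α i)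

/-- Restriction of a full assignment to the coordinates in `Y`. -/
def restrictTo {V : Type} {α : V → Type} (Y : Finset V) (g : ∀ i, α i) :
    ∀ i : Y, α i := fun i => g i

/-- Combination of an assignment on `X` and an assignment on `Z` into an
assignment on `X ∪ Z` (giving precedence to the one on `X`). -/
def combine {V : Type} [DecidableEq V] {α : V → Type} {X Z : Finset V}
    (xv : ∀ i : X, α i) (zv : ∀ i : Z, α i) : ∀ i : (X ∪ Z : Finset V), α i :=
  fun i => if h : (i : V) ∈ X then xv ⟨i, h⟩
    else zv ⟨i, (Finset.mem_union.mp i.2).resolve_left h⟩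

/-- The affects relation `X ⊨ Y|do(Z)`: there exist assignments `x` on `X` and `z`
on `Z` such that the marginal on `Y` of the intervened distribution `D (X∪Z) (x⊕z)`
differs from the marginal on `Y` of `D Z z`. -/
def affects {V : Type} [DecidableEq V] {α : V → Type}
    (D : InterventionFamily V α) (X Y Z : Finset V) : Prop :=
  ∃ (xv : ∀ i : X, α i) (zv : ∀ i : Z, α i),
    PMF.map (restrictTo Y) (D (X ∪ Z) (combine xv zv)) ≠
      PMF.map (restrictTo Y) (D Z zv)


lemma D_congr {V : Type} [DecidableEq V] {α : V → Type} (D : InterventionFamily V α)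
    {I I' : Finset V} (h : I = I') {v : ∀ i : I, α i} {v' : ∀ i : I', α i}
    (hv : ∀ (i : V) (hi : i ∈ I) (hi' : i ∈ I'), v ⟨i, hi⟩ = v' ⟨i, hi'⟩) :
    D I v = D I' v' := by
  subst h
  congr 1
  funext i
  exact hv i i.2 i.2

lemma split_combine {V : Type} [DecidableEq V] {α : V → Type} {s₁ s₂ Z : Finset V}
    (x₁ : ∀ i : s₁, α i) (w : ∀ i : (s₂ ∪ Z : Finset V), α i)
    (i : V) (hi : i ∈ s₁ ∪ (s₂ ∪ Z)) (hi' : i ∈ (s₁ ∪ s₂) ∪ Z) :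
    combine x₁ w ⟨i, hi⟩ =
      combine (combine x₁ (fun j => w ⟨j, Finset.mem_union_left _ j.2⟩))
        (fun j => w ⟨j, Finset.mem_union_right _ j.2⟩) ⟨i, hi'⟩ := by
  by_cases h1 : i ∈ s₁
  · have h12 : i ∈ s₁ ∪ s₂ := Finset.mem_union_left _ h1
    simp [combine, h1, h12]
  · by_cases h2 : i ∈ s₂
    · have h12 : i ∈ s₁ ∪ s₂ := Finset.mem_union_right _ h2
      simp [combine, h1, h2, h12]
    · have h12 : i ∉ s₁ ∪ s₂ := by simp [Finset.mem_union, h1, h2]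
      simp [combine, h1, h12]

/-- If `X ⊨ Y|do(Z)` holds and is Clus₁, then for all disjoint `s¹, s² ⊊ X` with
`s¹` nonempty and `s¹ ∪ s² ≠ X`, one has `s¹ ⊭ Y|do(s² ∪ Z)`. -/
theorem clus1_no_partial_affects {V : Type} [Fintype V] [DecidableEq V] {α : V → Type}
    [∀ i, Fintype (α i)] [∀ i, Nonempty (α i)]
    (D : InterventionFamily V α) (X Y Z : Finset V)
    (hXY : Disjoint X Y) (hXZ : Disjoint X Z) (hYZ : Disjoint Y Z)
    (hX : X.Nonempty) (hY : Y.Nonempty)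
    (haff : affects D X Y Z)
    (hcard : 2 ≤ X.card)
    (hclus : ∀ sX : Finset V, sX ⊂ X → sX.Nonempty → ¬ affects D sX Y Z) :
    ∀ s₁ s₂ : Finset V, s₁ ⊂ X → s₂ ⊂ X → Disjoint s₁ s₂ → s₁.Nonempty →
      s₁ ∪ s₂ ≠ X → ¬ affects D s₁ Y (s₂ ∪ Z) := by
  intro s₁ s₂ h₁ h₂ hdisj hne₁ hunion haff'
  obtain ⟨x₁, w, hne⟩ := haff'
  by_cases hs₂ : s₂ = ∅
  · subst hs₂
    have : affects D s₁ Y (∅ ∪ Z) := ⟨x₁, w, hne⟩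
    rw [Finset.empty_union] at this
    exact hclus s₁ h₁ hne₁ this
  · have hs₂ne : s₂.Nonempty := Finset.nonempty_iff_ne_empty.mpr hs₂
    set x₂ : ∀ i : s₂, α i := fun j => w ⟨j, Finset.mem_union_left _ j.2⟩ with hx₂
    set z : ∀ i : Z, α i := fun j => w ⟨j, Finset.mem_union_right _ j.2⟩ with hz
    have hw : combine x₂ z = w := by
      funext i
      unfold combine
      split_ifs <;> rfl
    have hss : s₁ ∪ s₂ ⊂ X :=
      (Finset.union_subset h₁.subset h₂.subset).ssubset_of_ne hunion
    have h12 := hclus (s₁ ∪ s₂) hss (hne₁.mono Finset.subset_union_left)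
    have hs2 := hclus s₂ h₂ hs₂ne
    simp only [affects, not_exists, not_not] at h12 hs2
    have key1 : D (s₁ ∪ (s₂ ∪ Z)) (combine x₁ w) =
        D ((s₁ ∪ s₂) ∪ Z) (combine (combine x₁ x₂) z) :=
      D_congr D (Finset.union_assoc s₁ s₂ Z).symm
        (fun i hi hi' => split_combine x₁ w i hi hi')
    apply hne
    rw [key1, h12 (combine x₁ x₂) z, ← hw, hs2 x₂ z]
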